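/- For every integer k≥3, the F(k) sets R_{i,j}, where i and j range over the integers with k−3≤i≤k−2 and 1−F(k)≤j≤−F(i+1), are pairwise disjoint and their union equals {n∈ℕ : n≥F(k)} (this is the k-th standard Fibonacci-like partition of the second kind). -/

import Mathlib

/-- The golden ratio φ = (1 + √5)/2. -/
noncomputable def phi : ℝ := (1 + Real.sqrt 5) / 2

/-- The lower Wythoff sequence a(n) = ⌊nφ⌋. -/
noncomputable def wa (n : ℕ) : ℕ := ⌊(n : ℝ) * phi⌋₊

/-- f_{i,j}(n) = F(i+1)·a(n) + F(i)·n − j. -/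
noncomputable def fij (i : ℕ) (j : ℤ) (n : ℕ) : ℤ :=
  (Nat.fib (i + 1) : ℤ) * wa n + (Nat.fib i : ℤ) * n - j

/-- R_{i,j} = { f_{i,j}(n) : n ∈ ℕ, n ≥ 1 }. -/
def R (i : ℕ) (j : ℤ) : Set ℤ := {m | ∃ n : ℕ, 0 < n ∧ fij i j n = m}

/-- The index set of the k-th standard Fibonacci-like partition of the second kind:
pairs (i, j) with k−3 ≤ i ≤ k−2 and 1−F(k) ≤ j ≤ −F(i+1). -/
def IdxSecond (k : ℕ) : Set (ℕ × ℤ) :=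
  {p | k - 3 ≤ p.1 ∧ p.1 ≤ k - 2 ∧
       1 - (Nat.fib k : ℤ) ≤ p.2 ∧ p.2 ≤ -(Nat.fib (p.1 + 1) : ℤ)}


lemma one_lt_phi : 1 < phi := Real.one_lt_goldenRatio
lemma phi_lt_two : phi < 2 := Real.goldenRatio_lt_two
lemma phi_pos : 0 < phi := Real.goldenRatio_pos
lemma phi_sq : phi * phi = phi + 1 := by
  have := Real.goldenRatio_sq; rw [sq] at this; exact this
lemma phi_irr : Irrational phi := Real.goldenRatio_irrational

lemma fract_lt_one (n : ℕ) : Int.fract ((n:ℝ) * phi) < 1 := Int.fract_lt_one _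

lemma fract_pos (n : ℕ) (hn : 0 < n) : 0 < Int.fract ((n:ℝ) * phi) := by
  rcases lt_or_eq_of_le (Int.fract_nonneg ((n:ℝ) * phi)) with h | h
  · exact h
  · exfalso
    have hirr : Irrational ((n:ℝ) * phi) := phi_irr.natCast_mul (by omega)
    have h2 : ((n:ℝ) * phi) = ⌊(n:ℝ)*phi⌋ := by
      have := Int.fract_add_floor ((n:ℝ)*phi)
      rw [← h] at this; linarith
    exact hirr.ne_int _ h2

lemma wa_cast (n : ℕ) : (wa n : ℝ) = (n:ℝ) * phi - Int.fract ((n:ℝ) * phi) := by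
  unfold wa
  have h0 : (0:ℝ) ≤ (n:ℝ) * phi := mul_nonneg (Nat.cast_nonneg n) phi_pos.le
  rw [natCast_floor_eq_intCast_floor h0, Int.self_sub_fract]

lemma wa_lt_succ (n : ℕ) : wa n < wa (n+1) := by
  have h1 := wa_cast n; have h2 := wa_cast (n+1)
  have h3 := fract_lt_one (n+1); have h4 := Int.fract_nonneg ((n:ℝ)*phi)
  have h5 := one_lt_phi
  have hexp : ((n:ℝ)+1)*phi = (n:ℝ)*phi + phi := by ring
  have : (wa n : ℝ) < wa (n+1) := by
    rw [h1, h2]; push_cast at h3 ⊢; rw [hexp] at h3 ⊢; linarith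
  exact_mod_cast this

lemma wa_mono : StrictMono wa := strictMono_nat_of_lt_succ wa_lt_succ

lemma wa_one : wa 1 = 1 := by
  have h0 : (0:ℝ) ≤ ((1:ℕ):ℝ) * phi := mul_nonneg (by norm_num) phi_pos.le
  have : ⌊((1:ℕ):ℝ) * phi⌋₊ = 1 := by
    rw [Nat.floor_eq_iff' (by norm_num)]
    push_cast
    constructor
    · linarith [one_lt_phi]
    · linarith [phi_lt_two]
  exact this

lemma wa_pos (n : ℕ) (hn : 0 < n) : 0 < wa n := by
  have : wa 1 ≤ wa n := wa_mono.le_iff_le.mpr hn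
  rw [wa_one] at this; omega

-- W3 : wa (wa n) = wa n + n - 1
lemma wa_wa (n : ℕ) (hn : 0 < n) : wa (wa n) + 1 = wa n + n := by
  obtain ⟨n', rfl⟩ : ∃ n', n = n' + 1 := ⟨n - 1, by omega⟩
  set n := n' + 1 with hn'
  have hθ1 := fract_pos n hn; have hθ2 := fract_lt_one n
  have hwa := wa_cast n
  set θ := Int.fract ((n:ℝ)*phi) with hθ
  have hx : (wa n : ℝ) * phi = (n:ℝ)*phi + n - θ*phi := by
    rw [hwa]; linear_combination (n:ℝ) * phi_sq
  have h0 : (0:ℝ) ≤ ((wa n : ℕ):ℝ) * phi := mul_nonneg (Nat.cast_nonneg _) phi_pos.le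
  have key : ⌊((wa n : ℕ):ℝ) * phi⌋₊ = wa n + n' := by
    rw [Nat.floor_eq_iff h0, hx]
    constructor
    · push_cast [hwa]; nlinarith [one_lt_phi, phi_lt_two, (show (n:ℝ) = n' + 1 by rw [hn']; push_cast; ring)]
    · push_cast [hwa]; nlinarith [one_lt_phi, phi_lt_two, (show (n:ℝ) = n' + 1 by rw [hn']; push_cast; ring)]
  have key2 : wa (wa n) = wa n + n' := key
  omega

-- W4 : wa (wa n + n) = 2 wa n + n
lemma wa_wb (n : ℕ) (hn : 0 < n) : wa (wa n + n) = 2 * wa n + n := by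
  have hθ1 := fract_pos n hn; have hθ2 := fract_lt_one n
  have hwa := wa_cast n
  set θ := Int.fract ((n:ℝ)*phi) with hθ
  have hx : ((wa n + n : ℕ) : ℝ) * phi = 2*((n:ℝ)*phi) + n - θ*phi := by
    push_cast
    rw [hwa]; linear_combination (n:ℝ) * phi_sq
  have h0 : (0:ℝ) ≤ ((wa n + n : ℕ):ℝ) * phi := mul_nonneg (Nat.cast_nonneg _) phi_pos.le
  have key : ⌊((wa n + n : ℕ):ℝ) * phi⌋₊ = 2 * wa n + n := by
    rw [Nat.floor_eq_iff h0, hx]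
    constructor
    · push_cast [hwa]; nlinarith [one_lt_phi, phi_lt_two]
    · push_cast [hwa]; nlinarith [one_lt_phi, phi_lt_two]
  exact key

lemma phi_conj : Real.HolderConjugate phi (phi + 1) := by
  rw [Real.holderConjugate_iff]
  constructor
  · exact one_lt_phi
  · have h1 : phi ≠ 0 := ne_of_gt phi_pos
    have h2 : phi + 1 ≠ 0 := by linarith [phi_pos]
    have h3 : phi^2 = phi + 1 := by rw [sq]; exact phi_sq
    field_simp
    linarith [h3]

lemma wa_int (m : ℕ) : (wa m : ℤ) = beattySeq phi (m : ℤ) := by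
  unfold wa beattySeq
  rw [Int.natCast_floor_eq_floor (mul_nonneg (Nat.cast_nonneg m) phi_pos.le)]
  norm_num

lemma wb_int (m : ℕ) : (wa m : ℤ) + m = beattySeq (phi + 1) (m : ℤ) := by
  unfold beattySeq
  have h : ((m:ℤ):ℝ) * (phi + 1) = (m:ℝ) * phi + ((m:ℤ):ℝ) := by push_cast; ring
  rw [h, Int.floor_add_intCast]
  have h2 : (wa m : ℤ) = ⌊(m:ℝ) * phi⌋ :=
    Int.natCast_floor_eq_floor (mul_nonneg (Nat.cast_nonneg m) phi_pos.le)
  omega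

lemma beatty_total (x : ℕ) (hx : 0 < x) :
    (∃ m, 0 < m ∧ wa m = x) ∨ (∃ m, 0 < m ∧ wa m + m = x) := by
  have hmem : (x:ℤ) ∈ {n : ℤ | 0 < n} := by
    simp only [Set.mem_setOf_eq]; exact_mod_cast hx
  rw [← Irrational.beattySeq_symmDiff_beattySeq_pos phi_conj phi_irr,
    Set.mem_symmDiff] at hmem
  rcases hmem with ⟨⟨k, hk, hkx⟩, -⟩ | ⟨⟨k, hk, hkx⟩, -⟩
  · left
    refine ⟨k.toNat, by omega, ?_⟩
    have hk' : ((k.toNat : ℕ) : ℤ) = k := by omega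
    have := wa_int k.toNat
    rw [hk', hkx] at this
    exact_mod_cast this
  · right
    refine ⟨k.toNat, by omega, ?_⟩
    have hk' : ((k.toNat : ℕ) : ℤ) = k := by omega
    have := wb_int k.toNat
    rw [hk', hkx] at this
    omega

lemma beatty_disj (m m' : ℕ) (hm : 0 < m) (hm' : 0 < m') : wa m ≠ wa m' + m' := by
  intro h
  have hx : (0:ℤ) < (wa m : ℤ) := by exact_mod_cast wa_pos m hm
  have hmem : ((wa m : ℤ)) ∈ {n : ℤ | 0 < n} := hx
  rw [← Irrational.beattySeq_symmDiff_beattySeq_pos phi_conj phi_irr,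
    Set.mem_symmDiff] at hmem
  have h1 : (wa m : ℤ) ∈ {x | ∃ k > 0, beattySeq phi k = x} := by
    exact ⟨(m:ℤ), by exact_mod_cast hm, (wa_int m).symm⟩
  have h2 : (wa m : ℤ) ∈ {x | ∃ k > 0, beattySeq (phi+1) k = x} := by
    refine ⟨(m':ℤ), by exact_mod_cast hm', ?_⟩
    rw [← wb_int]
    exact_mod_cast h.symm
  rcases hmem with ⟨-, hno⟩ | ⟨-, hno⟩
  · exact hno h2
  · exact hno h1

lemma fij_a (i : ℕ) (j : ℤ) (m : ℕ) (hm : 0 < m) :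
    fij i j (wa m) = fij (i+1) (j + Nat.fib (i+1)) m := by
  have hW : (wa (wa m) : ℤ) = (wa m : ℤ) + m - 1 := by
    have := wa_wa m hm; omega
  have hfib : (Nat.fib (i+2) : ℤ) = Nat.fib i + Nat.fib (i+1) := by
    exact_mod_cast Nat.fib_add_two
  unfold fij
  rw [hW, show i+1+1 = i+2 from rfl, hfib]
  ring

lemma fij_b (i : ℕ) (j : ℤ) (m : ℕ) (hm : 0 < m) :
    fij i j (wa m + m) = fij (i+2) j m := by
  have hW : (wa (wa m + m) : ℤ) = 2 * (wa m : ℤ) + m := by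
    have := wa_wb m hm; push_cast [this]; ring
  have hfib2 : (Nat.fib (i+2) : ℤ) = Nat.fib i + Nat.fib (i+1) := by
    exact_mod_cast Nat.fib_add_two
  have hfib3 : (Nat.fib (i+3) : ℤ) = Nat.fib (i+1) + Nat.fib (i+2) := by
    exact_mod_cast (Nat.fib_add_two (n := i+1))
  unfold fij
  push_cast
  rw [hW, show i+2+1 = i+3 from rfl, hfib3, hfib2]
  ring

lemma fij_inj (i : ℕ) (j : ℤ) (n n' : ℕ) (h : fij i j n = fij i j n') : n = n' := by
  have key : ∀ a b : ℕ, a < b → fij i j a < fij i j b := by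
    intro a b hab
    unfold fij
    have h1 : wa a < wa b := wa_mono hab
    have h2 : Nat.fib (i+1) * wa a + Nat.fib i * a < Nat.fib (i+1) * wa b + Nat.fib i * b := by
      have hf : 0 < Nat.fib (i+1) := Nat.fib_pos.mpr (by omega)
      have := (Nat.mul_lt_mul_left hf).mpr h1
      have := Nat.mul_le_mul_left (Nat.fib i) (le_of_lt hab)
      omega
    have h2' : (Nat.fib (i+1) : ℤ) * wa a + (Nat.fib i : ℤ) * a
        < (Nat.fib (i+1) : ℤ) * wa b + (Nat.fib i : ℤ) * b := by exact_mod_cast h2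
    omega
  rcases lt_trichotomy n n' with hlt | heq | hgt
  · exact absurd h (ne_of_lt (key n n' hlt))
  · exact heq
  · exact absurd h.symm (ne_of_lt (key n' n hgt))

lemma R_split (i : ℕ) (j : ℤ) : R i j = R (i+1) (j + Nat.fib (i+1)) ∪ R (i+2) j := by
  ext x
  constructor
  · rintro ⟨n, hn, hfx⟩
    rcases beatty_total n hn with ⟨m, hm, rfl⟩ | ⟨m, hm, rfl⟩
    · exact Or.inl ⟨m, hm, by rw [← fij_a i j m hm]; exact hfx⟩
    · exact Or.inr ⟨m, hm, by rw [← fij_b i j m hm]; exact hfx⟩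
  · rintro (⟨m, hm, hfx⟩ | ⟨m, hm, hfx⟩)
    · exact ⟨wa m, wa_pos m hm, by rw [fij_a i j m hm]; exact hfx⟩
    · exact ⟨wa m + m, by have := wa_pos m hm; omega, by rw [fij_b i j m hm]; exact hfx⟩

lemma R_split_disj (i : ℕ) (j : ℤ) (x : ℤ)
    (h1 : x ∈ R (i+1) (j + Nat.fib (i+1))) (h2 : x ∈ R (i+2) j) : False := by
  obtain ⟨m, hm, hfx⟩ := h1
  obtain ⟨m', hm', hfx'⟩ := h2
  rw [← fij_a i j m hm] at hfx
  rw [← fij_b i j m' hm'] at hfx'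
  have := fij_inj i j (wa m) (wa m' + m') (by rw [hfx, hfx'])
  exact beatty_disj m m' hm hm' this

lemma R_shift (i : ℕ) (j c x : ℤ) : x ∈ R i (j - c) ↔ x - c ∈ R i j := by
  constructor
  · rintro ⟨n, hn, hfx⟩
    exact ⟨n, hn, by unfold fij at hfx ⊢; omega⟩
  · rintro ⟨n, hn, hfx⟩
    exact ⟨n, hn, by unfold fij at hfx ⊢; omega⟩

def Good (a : ℕ) (p : ℕ × ℤ) : Prop :=
  (p.1 = a ∨ p.1 = a + 1) ∧ 1 - (Nat.fib (a+3) : ℤ) ≤ p.2 ∧ p.2 ≤ -(Nat.fib (p.1+1) : ℤ)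

lemma fib_facts (a : ℕ) : Nat.fib (a+2) = Nat.fib a + Nat.fib (a+1) ∧
    Nat.fib (a+3) = Nat.fib (a+1) + Nat.fib (a+2) ∧
    Nat.fib (a+4) = Nat.fib (a+2) + Nat.fib (a+3) ∧ 0 < Nat.fib (a+1) := by
  refine ⟨Nat.fib_add_two, Nat.fib_add_two (n := a+1), Nat.fib_add_two (n := a+2),
    Nat.fib_pos.mpr (by omega)⟩

lemma transfer (a : ℕ) (p : ℕ × ℤ) (hp : Good (a+1) p) (x : ℤ) (hx : x ∈ R p.1 p.2) :
    ∃ q : ℕ × ℤ, Good a q ∧ x - (Nat.fib (a+2):ℤ) ∈ R q.1 q.2 ∧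
      ((p.1 = a+1 ∧ p.2 + 2*(Nat.fib (a+2):ℤ) ≤ 0 ∧ q = (a+1, p.2 + Nat.fib (a+2)))
      ∨ (p.1 = a+1 ∧ 1 ≤ p.2 + 2*(Nat.fib (a+2):ℤ) ∧ q = (a, p.2 + Nat.fib a) ∧
          x - (Nat.fib (a+2):ℤ) ∈ R (a+1) ((p.2 + (Nat.fib a:ℤ)) + Nat.fib (a+1)))
      ∨ (p.1 = a+2 ∧ q = (a, p.2 + Nat.fib (a+2)) ∧
          x - (Nat.fib (a+2):ℤ) ∈ R (a+2) (p.2 + Nat.fib (a+2)))) := by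
  obtain ⟨f2, f3, f4, f1⟩ := fib_facts a
  obtain ⟨hp1, hp2, hp3⟩ := hp
  obtain ⟨p1, p2⟩ := p
  simp only at hp1 hp2 hp3 hx ⊢
  rcases hp1 with rfl | rfl
  · -- p1 = a + 1
    rw [show a+1+3 = a+4 from rfl] at hp2
    rw [show a+1+1 = a+2 from rfl] at hp3
    have hmem : x - (Nat.fib (a+2):ℤ) ∈ R (a+1) (p2 + Nat.fib (a+2)) := by
      refine (R_shift (a+1) (p2 + Nat.fib (a+2)) (Nat.fib (a+2)) x).mp ?_
      rwa [show (p2 + (Nat.fib (a+2):ℤ)) - Nat.fib (a+2) = p2 by ring]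
    by_cases hk : p2 + 2*(Nat.fib (a+2):ℤ) ≤ 0
    · refine ⟨(a+1, p2 + Nat.fib (a+2)), ⟨Or.inr rfl, by simp only; omega,
        by simp only [show a+1+1 = a+2 from rfl]; push_cast; omega⟩,
        hmem, Or.inl ⟨rfl, hk, rfl⟩⟩
    · have hmem' : x - (Nat.fib (a+2):ℤ) ∈ R (a+1) ((p2 + (Nat.fib a:ℤ)) + Nat.fib (a+1)) := by
        rwa [show (p2 + (Nat.fib a:ℤ)) + Nat.fib (a+1) = p2 + Nat.fib (a+2) by push_cast; omega]
      refine ⟨(a, p2 + Nat.fib a), ⟨Or.inl rfl, by simp only; omega, by simp only; push_cast; omega⟩,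
        ?_, Or.inr (Or.inl ⟨rfl, by omega, rfl, hmem'⟩)⟩
      simp only
      rw [R_split a (p2 + Nat.fib a)]
      exact Or.inl hmem'
  · -- p1 = a + 2
    rw [show a+1+3 = a+4 from rfl] at hp2
    rw [show a+1+1+1 = a+3 from rfl] at hp3
    have hmem : x - (Nat.fib (a+2):ℤ) ∈ R (a+2) (p2 + Nat.fib (a+2)) := by
      refine (R_shift (a+2) (p2 + Nat.fib (a+2)) (Nat.fib (a+2)) x).mp ?_
      rwa [show (p2 + (Nat.fib (a+2):ℤ)) - Nat.fib (a+2) = p2 by ring]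
    refine ⟨(a, p2 + Nat.fib (a+2)), ⟨Or.inl rfl, by simp only; omega, by simp only; push_cast; omega⟩,
      ?_, Or.inr (Or.inr ⟨rfl, rfl, hmem⟩)⟩
    simp only
    rw [R_split a (p2 + Nat.fib (a+2))]
    exact Or.inr hmem

lemma main_ind (a : ℕ) : ∀ x : ℤ,
    ((Nat.fib (a+3) : ℤ) ≤ x ↔ ∃ p : ℕ × ℤ, Good a p ∧ x ∈ R p.1 p.2) ∧
    (∀ p q : ℕ × ℤ, Good a p → Good a q → x ∈ R p.1 p.2 → x ∈ R q.1 q.2 → p = q) := by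
  induction a with
  | zero =>
    intro x
    have hf0 : Nat.fib 0 = 0 := rfl
    have hf1 : Nat.fib 1 = 1 := rfl
    have hf2 : Nat.fib 2 = 1 := rfl
    have hf3 : Nat.fib 3 = 2 := rfl
    have memR0 : ∀ y : ℤ, y ∈ R 0 (-1) ↔ ∃ n : ℕ, 0 < n ∧ (wa n : ℤ) + 1 = y := by
      intro y
      constructor
      · rintro ⟨n, hn, hfx⟩
        refine ⟨n, hn, ?_⟩
        unfold fij at hfx
        rw [hf1, hf0] at hfx
        push_cast at hfx; omega
      · rintro ⟨n, hn, hfx⟩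
        refine ⟨n, hn, ?_⟩
        unfold fij
        rw [hf1, hf0]
        push_cast; omega
    have memR1 : ∀ y : ℤ, y ∈ R 1 (-1) ↔ ∃ n : ℕ, 0 < n ∧ (wa n : ℤ) + n + 1 = y := by
      intro y
      constructor
      · rintro ⟨n, hn, hfx⟩
        refine ⟨n, hn, ?_⟩
        unfold fij at hfx
        rw [hf2, hf1] at hfx
        push_cast at hfx; omega
      · rintro ⟨n, hn, hfx⟩
        refine ⟨n, hn, ?_⟩
        unfold fij
        rw [hf2, hf1]
        push_cast; omega
    have goodcases : ∀ p : ℕ × ℤ, Good 0 p → p = (0, -1) ∨ p = (1, -1) := by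
      rintro ⟨p1, p2⟩ ⟨h1, h2, h3⟩
      simp only at h1 h2 h3
      rw [hf3] at h2
      rcases h1 with rfl | rfl
      · left; simp only [Prod.mk.injEq]
        have c1 : Nat.fib (0+1) = 1 := rfl
        exact ⟨trivial, by omega⟩
      · right; simp only [Prod.mk.injEq]
        have c2 : Nat.fib (0+1+1) = 1 := rfl
        exact ⟨trivial, by omega⟩
    constructor
    · constructor
      · intro hx
        rw [hf3] at hx
        set y := (x - 1).toNat with hy
        have hyx : (y : ℤ) = x - 1 := by omega
        have hy1 : 0 < y := by omega
        rcases beatty_total y hy1 with ⟨m, hm, hwm⟩ | ⟨m, hm, hwm⟩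
        · refine ⟨(0, -1), ⟨Or.inl rfl, by rw [hf3]; omega, by rw [hf1]; omega⟩, ?_⟩
          rw [memR0 x]
          exact ⟨m, hm, by omega⟩
        · refine ⟨(1, -1), ⟨Or.inr rfl, by rw [hf3]; omega, by rw [hf2]; omega⟩, ?_⟩
          rw [memR1 x]
          exact ⟨m, hm, by omega⟩
      · rintro ⟨p, hp, hx⟩
        rcases goodcases p hp with rfl | rfl
        · simp only at hx
          rw [memR0 x] at hx
          obtain ⟨n, hn, hfx⟩ := hx
          have := wa_pos n hn
          rw [hf3]; omega
        · simp only at hx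
          rw [memR1 x] at hx
          obtain ⟨n, hn, hfx⟩ := hx
          have := wa_pos n hn
          rw [hf3]; omega
    · intro p q hp hq hxp hxq
      rcases goodcases p hp with rfl | rfl <;> rcases goodcases q hq with rfl | rfl
      · rfl
      · exfalso
        simp only at hxp hxq
        rw [memR0 x] at hxp; rw [memR1 x] at hxq
        obtain ⟨n, hn, hfx⟩ := hxp
        obtain ⟨n', hn', hfx'⟩ := hxq
        have : wa n = wa n' + n' := by omega
        exact beatty_disj n n' hn hn' this
      · exfalso
        simp only at hxp hxq
        rw [memR1 x] at hxp; rw [memR0 x] at hxq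
        obtain ⟨n, hn, hfx⟩ := hxp
        obtain ⟨n', hn', hfx'⟩ := hxq
        have : wa n' = wa n + n := by omega
        exact beatty_disj n' n hn' hn this
      · rfl
  | succ a IH =>
    intro x
    obtain ⟨f2, f3, f4, f1⟩ := fib_facts a
    constructor
    · constructor
      · intro hx
        rw [show a+1+3 = a+4 from rfl] at hx
        have hx' : (Nat.fib (a+3) : ℤ) ≤ x - Nat.fib (a+2) := by omega
        obtain ⟨q, hq, hmem⟩ := ((IH (x - Nat.fib (a+2))).1).mp hx'
        obtain ⟨hq1, hq2, hq3⟩ := hq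
        obtain ⟨q1, q2⟩ := q
        simp only at hq1 hq2 hq3 hmem
        rcases hq1 with h | h
        · rw [h] at hmem hq3
          rw [R_split a q2] at hmem
          rcases hmem with hmem | hmem
          · -- new p = (a+1, q2 + fib (a+1) - fib (a+2))
            refine ⟨(a+1, q2 + (Nat.fib (a+1):ℤ) - Nat.fib (a+2)), ⟨Or.inl rfl, ?_, ?_⟩, ?_⟩
            · simp only
              rw [show a+1+3 = a+4 from rfl]; push_cast; omega
            · simp only
              rw [show a+1+1 = a+2 from rfl]
              rw [show a+1 = a+1 from rfl] at hq3
              push_cast; omega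
            · simp only
              refine (R_shift (a+1) (q2 + (Nat.fib (a+1):ℤ)) (Nat.fib (a+2)) x).mpr ?_
              exact hmem
          · refine ⟨(a+2, q2 - (Nat.fib (a+2):ℤ)), ⟨Or.inr rfl, ?_, ?_⟩, ?_⟩
            · simp only
              rw [show a+1+3 = a+4 from rfl]; push_cast; omega
            · simp only
              rw [show a+2+1 = a+3 from rfl]
              push_cast; omega
            · simp only
              refine (R_shift (a+2) q2 (Nat.fib (a+2)) x).mpr hmem
        · rw [h] at hmem hq3
          rw [show a+1+1 = a+2 from rfl] at hq3
          refine ⟨(a+1, q2 - (Nat.fib (a+2):ℤ)), ⟨Or.inl rfl, ?_, ?_⟩, ?_⟩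
          · simp only
            rw [show a+1+3 = a+4 from rfl]; push_cast; omega
          · simp only
            rw [show a+1+1 = a+2 from rfl]
            push_cast; omega
          · simp only
            exact (R_shift (a+1) q2 (Nat.fib (a+2)) x).mpr hmem
      · rintro ⟨p, hp, hx⟩
        obtain ⟨q, hq, hmem, -⟩ := transfer a p hp x hx
        have := ((IH (x - Nat.fib (a+2))).1).mpr ⟨q, hq, hmem⟩
        rw [show a+1+3 = a+4 from rfl]
        omega
    · intro p q hp hq hxp hxq
      obtain ⟨p', hp', hpm, hpc⟩ := transfer a p hp x hxp
      obtain ⟨q', hq', hqm, hqc⟩ := transfer a q hq x hxq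
      have heq : p' = q' := (IH (x - Nat.fib (a+2))).2 p' q' hp' hq' hpm hqm
      obtain ⟨p1, p2⟩ := p
      obtain ⟨q1, q2⟩ := q
      simp only at hpc hqc ⊢
      rcases hpc with ⟨hpa, hpb, rfl⟩ | ⟨hpa, hpb, rfl, hpx⟩ | ⟨hpa, rfl, hpx⟩ <;>
        rcases hqc with ⟨hqa, hqb, rfl⟩ | ⟨hqa, hqb, rfl, hqx⟩ | ⟨hqa, rfl, hqx⟩ <;>
          rw [Prod.mk.injEq] at heq ⊢ <;> obtain ⟨e1, e2⟩ := heq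
      · exact ⟨by omega, by omega⟩
      · exact absurd e1 (by omega)
      · exact absurd e1 (by omega)
      · exact absurd e1 (by omega)
      · exact ⟨by omega, by omega⟩
      · -- p split-a, q row a+2 : contradiction via R_split_disj
        exfalso
        rw [e2] at hpx
        exact R_split_disj a (q2 + (Nat.fib (a+2):ℤ)) (x - Nat.fib (a+2)) hpx hqx
      · exact absurd e1 (by omega)
      · exfalso
        rw [← e2] at hqx
        exact R_split_disj a (p2 + (Nat.fib (a+2):ℤ)) (x - Nat.fib (a+2)) hqx hpx
      · exact ⟨by omega, by omega⟩

lemma idx_iff (a : ℕ) (p : ℕ × ℤ) : p ∈ IdxSecond (a+3) ↔ Good a p := by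
  unfold IdxSecond Good
  simp only [Set.mem_setOf_eq]
  constructor
  · rintro ⟨h1, h2, h3, h4⟩
    exact ⟨by omega, h3, h4⟩
  · rintro ⟨h1, h2, h3⟩
    exact ⟨by omega, by omega, h2, h3⟩

theorem stmt_6 (k : ℕ) (hk : 3 ≤ k) :
    (∀ p ∈ IdxSecond k, ∀ q ∈ IdxSecond k, p ≠ q → R p.1 p.2 ∩ R q.1 q.2 = ∅) ∧
    (⋃ p ∈ IdxSecond k, R p.1 p.2) = {m : ℤ | (Nat.fib k : ℤ) ≤ m} := by
  obtain ⟨a, rfl⟩ : ∃ a, k = a + 3 := ⟨k - 3, by omega⟩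
  constructor
  · intro p hp q hq hpq
    rw [Set.eq_empty_iff_forall_notMem]
    rintro x ⟨hx1, hx2⟩
    exact hpq ((main_ind a x).2 p q ((idx_iff a p).mp hp) ((idx_iff a q).mp hq) hx1 hx2)
  · ext x
    simp only [Set.mem_iUnion, Set.mem_setOf_eq, exists_prop]
    constructor
    · rintro ⟨p, hp, hx⟩
      exact ((main_ind a x).1).mpr ⟨p, (idx_iff a p).mp hp, hx⟩
    · intro hx
      obtain ⟨p, hp, hmem⟩ := ((main_ind a x).1).mp hx
      exact ⟨p, (idx_iff a p).mpr hp, hmem⟩
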